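/- For X, Y ∈ Λ^ℓ V (n = 2ℓ): g(X,Y) = 0 if and only if Pf(X,Y) = 0 and Λ^ℓ h(X,Y) = 0. Consequently g is non-degenerate, and if Λ^ℓ h is anisotropic then g is anisotropic. -/

import Mathlib

open ExteriorAlgebra

/-- The wedge product of a family of vectors in the exterior algebra. -/
noncomputable def wedgeFam (F : Type*) {V : Type*} [Field F] [AddCommGroup V] [Module F V]
    {k : ℕ} (u : Fin k → V) : ExteriorAlgebra F V :=
  (List.ofFn fun i => ExteriorAlgebra.ι F (u i)).prod

/-- The element `x₀ + j·x₁` of the algebra `K_ℓ`. -/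
def Kmk {F : Type*} [Field F] (σ : F → F) (δ x0 x1 : F) : Matrix (Fin 2) (Fin 2) F :=
  !![x0, δ * σ x1; x1, σ x0]

/-- Two strictly monotone maps between `Fin` types with the same range are equal. -/
lemma strictMono_eq_of_range_eq {ℓ n : ℕ} {s t : Fin ℓ → Fin n}
    (hs : StrictMono s) (ht : StrictMono t) (hr : Set.range s = Set.range t) : s = t := by
  classical
  set S : Finset (Fin n) := Finset.univ.image s with hS
  have hcard : S.card = ℓ := by
    rw [hS, Finset.card_image_of_injective _ hs.injective, Finset.card_univ, Fintype.card_fin]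
  have hmem_s : ∀ x, s x ∈ S := fun x => Finset.mem_image_of_mem _ (Finset.mem_univ x)
  have hmem_t : ∀ x, t x ∈ S := by
    intro x
    have hx : t x ∈ Set.range s := hr ▸ Set.mem_range_self x
    obtain ⟨y, hy⟩ := hx
    exact hy ▸ hmem_s y
  rw [Finset.orderEmbOfFin_unique hcard hmem_s hs,
      Finset.orderEmbOfFin_unique hcard hmem_t ht]

/-- for `X, Y ∈ Λ^ℓ V` (`n = 2ℓ`): `g(X,Y) = 0` iff `Pf(X,Y) = 0`
and `Λ^ℓh(X,Y) = 0`; consequently `g` is non-degenerate, and anisotropic whenever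
`Λ^ℓ h` is anisotropic.  Here `g(X,Y) = Λ^ℓh(X,Y) + j·(−1)^ℓ·Pf(X,Y) ∈ K_ℓ`. -/
theorem g_vanishing_nondegenerate_anisotropic
    {F V : Type*} [Field F] [AddCommGroup V] [Module F V] [FiniteDimensional F V]
    (n ℓ : ℕ) (hfr : Module.finrank F V = n) (hn2 : n = 2 * ℓ)
    (σ : F ≃+* F) (hσ : ∀ a, σ (σ a) = a)
    (h : V → V → F)
    (h_add_left : ∀ u u' w, h (u + u') w = h u w + h u' w)
    (h_add_right : ∀ u w w', h u (w + w') = h u w + h u w')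
    (h_smul_left : ∀ (s : F) u w, h (s • u) w = σ s * h u w)
    (h_smul_right : ∀ (s : F) u w, h u (s • w) = s * h u w)
    (h_herm : ∀ u w, h w u = σ (h u w))
    (h_nondeg : ∀ u, (∀ w, h u w = 0) → u = 0)
    (v : Module.Basis (Fin n) F V)
    (h_orth : ∀ i j, i ≠ j → h (v i) (v j) = 0)
    (H : ExteriorAlgebra F V → ExteriorAlgebra F V → F)
    (H_add_left : ∀ x x' y, H (x + x') y = H x y + H x' y)
    (H_add_right : ∀ x y y', H x (y + y') = H x y + H x y')
    (H_smul_left : ∀ (s : F) x y, H (s • x) y = σ s * H x y)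
    (H_smul_right : ∀ (s : F) x y, H x (s • y) = s * H x y)
    (H_det : ∀ (k : ℕ) (u w : Fin k → V),
      H (wedgeFam F u) (wedgeFam F w) = Matrix.det (Matrix.of fun i j => h (u i) (w j)))
    (H_cross : ∀ (k m : ℕ), k ≠ m → ∀ x ∈ ⋀[F]^k V, ∀ y ∈ ⋀[F]^m V, H x y = 0)
    (b : ExteriorAlgebra F V →ₗ[F] F)
    (hb_inj : ∀ z ∈ ⋀[F]^n V, b z = 0 → z = 0)
    (hb_off : ∀ (k : ℕ), k ≠ n → ∀ z ∈ ⋀[F]^k V, b z = 0)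
    (J : ExteriorAlgebra F V → ExteriorAlgebra F V)
    (hJ_mem : ∀ x ∈ ⋀[F]^ℓ V, J x ∈ ⋀[F]^ℓ V)
    (hJ_char : ∀ x ∈ ⋀[F]^ℓ V, ∀ y ∈ ⋀[F]^ℓ V, b (J x * y) = H x y)
    (δ : F) (hδR : σ δ = δ) (hδ0 : δ ≠ 0)
    (hJsq : ∀ x ∈ ⋀[F]^ℓ V, J (J x) = δ • x) :
    -- g(X,Y) = 0 ↔ Pf(X,Y) = 0 ∧ Λ^ℓh(X,Y) = 0
    (∀ X ∈ ⋀[F]^ℓ V, ∀ Y ∈ ⋀[F]^ℓ V,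
        (Kmk ⇑σ δ (H X Y) ((-1 : F) ^ ℓ * b (X * Y)) = 0 ↔
          (b (X * Y) = 0 ∧ H X Y = 0))) ∧
    -- g is non-degenerate
    (∀ X ∈ ⋀[F]^ℓ V,
        (∀ Y ∈ ⋀[F]^ℓ V, Kmk ⇑σ δ (H X Y) ((-1 : F) ^ ℓ * b (X * Y)) = 0) → X = 0) ∧
    -- if Λ^ℓ h is anisotropic then so is g
    ((∀ X ∈ ⋀[F]^ℓ V, X ≠ 0 → H X X ≠ 0) →
      ∀ X ∈ ⋀[F]^ℓ V, X ≠ 0 →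
        Kmk ⇑σ δ (H X X) ((-1 : F) ^ ℓ * b (X * X)) ≠ 0) := by
  classical
  -- Kmk vanishes iff both entries vanish
  have hKzero : ∀ x0 x1 : F, Kmk ⇑σ δ x0 x1 = 0 ↔ (x0 = 0 ∧ x1 = 0) := by
    intro x0 x1
    constructor
    · intro hz
      constructor
      · have h00 : Kmk ⇑σ δ x0 x1 0 0 = (0 : Matrix (Fin 2) (Fin 2) F) 0 0 := by rw [hz]
        simpa [Kmk] using h00
      · have h10 : Kmk ⇑σ δ x0 x1 1 0 = (0 : Matrix (Fin 2) (Fin 2) F) 1 0 := by rw [hz]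
        simpa [Kmk] using h10
    · rintro ⟨h0, h1⟩
      subst h0; subst h1
      ext i j
      fin_cases i <;> fin_cases j <;> simp [Kmk]
  have hml : ((-1 : F) ^ ℓ) ≠ 0 := pow_ne_zero _ (neg_ne_zero.2 one_ne_zero)
  have part1 : ∀ X ∈ ⋀[F]^ℓ V, ∀ Y ∈ ⋀[F]^ℓ V,
      (Kmk ⇑σ δ (H X Y) ((-1 : F) ^ ℓ * b (X * Y)) = 0 ↔
        (b (X * Y) = 0 ∧ H X Y = 0)) := by
    intro X _ Y _
    rw [hKzero]
    constructor
    · rintro ⟨hH, hb1⟩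
      refine ⟨?_, hH⟩
      rcases mul_eq_zero.1 hb1 with h' | h'
      · exact absurd h' hml
      · exact h'
    · rintro ⟨hb1, hH⟩
      exact ⟨hH, by rw [hb1, mul_zero]⟩
  -- basic facts about H and h
  have hH0l : ∀ y, H 0 y = 0 := by
    intro y
    have h1 := H_smul_left 0 0 y
    rw [zero_smul, map_zero, zero_mul] at h1
    exact h1
  have hHsum : ∀ {ι : Type} (fs : Finset ι) (f : ι → ExteriorAlgebra F V)
      (y : ExteriorAlgebra F V), H (∑ i ∈ fs, f i) y = ∑ i ∈ fs, H (f i) y := by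
    intro ι fs f y
    induction fs using Finset.induction_on with
    | empty => simpa using hH0l y
    | insert _ _ hnot ih => rw [Finset.sum_insert hnot, Finset.sum_insert hnot, H_add_left, ih]
  have hh0r : ∀ u : V, h u 0 = 0 := by
    intro u
    have h1 := h_smul_right 0 u 0
    simpa using h1
  have hhsumr : ∀ (u : V) (fs : Finset (Fin n)) (g : Fin n → V),
      h u (∑ j ∈ fs, g j) = ∑ j ∈ fs, h u (g j) := by
    intro u fs g
    induction fs using Finset.induction_on with
    | empty => simpa using hh0r u
    | insert _ _ hnot ih => rw [Finset.sum_insert hnot, Finset.sum_insert hnot, h_add_right, ih]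
  have hc : ∀ i : Fin n, h (v i) (v i) ≠ 0 := by
    intro i hzero
    apply Module.Basis.ne_zero v i
    apply h_nondeg
    intro w
    rw [← Module.Basis.sum_repr v w, hhsumr]
    refine Finset.sum_eq_zero fun j _ => ?_
    rw [h_smul_right]
    rcases eq_or_ne i j with rfl | hij
    · rw [hzero, mul_zero]
    · rw [h_orth i j hij, mul_zero]
  -- the family of wedges of basis vectors
  set W : (Fin ℓ → Fin n) → ExteriorAlgebra F V := fun m => ιMulti F ℓ (v ∘ m) with hW
  have hWwedge : ∀ m : Fin ℓ → Fin n, W m = wedgeFam F (v ∘ m) := fun m => ιMulti_apply _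
  have hWmem : ∀ m, W m ∈ ⋀[F]^ℓ V := fun m => ιMulti_range F ℓ ⟨v ∘ m, rfl⟩
  -- spanning by strictly monotone wedges
  have hspan : ∀ X ∈ ⋀[F]^ℓ V,
      X ∈ Submodule.span F
        (Set.range fun s : {s : Fin ℓ → Fin n // StrictMono s} => W s.1) := by
    intro X hX
    have hmono : ∀ m : Fin ℓ → Fin n,
        W m ∈ Submodule.span F
          (Set.range fun s : {s : Fin ℓ → Fin n // StrictMono s} => W s.1) := by
      intro m
      by_cases hm : Function.Injective m
      · set π := Tuple.sort m with hπ
        have hsm : StrictMono (m ∘ π) :=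
          (Tuple.monotone_sort m).strictMono_of_injective (hm.comp π.injective)
        have hin : W (m ∘ π) ∈ Submodule.span F
            (Set.range fun s : {s : Fin ℓ → Fin n // StrictMono s} => W s.1) :=
          Submodule.subset_span ⟨⟨m ∘ π, hsm⟩, rfl⟩
        have hperm : W (m ∘ π) = Equiv.Perm.sign π • W m := by
          rw [hW]
          exact AlternatingMap.map_perm (ιMulti F ℓ) (v ∘ m) π
        rcases Int.units_eq_one_or (Equiv.Perm.sign π) with hs1 | hs1
        · rw [hperm, hs1, one_smul] at hin
          exact hin
        · rw [hperm, hs1] at hin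
          have : ((-1 : ℤˣ) • W m) = - W m := by simp
          rw [this] at hin
          exact (Submodule.neg_mem_iff _).1 hin
      · rw [Function.not_injective_iff] at hm
        obtain ⟨a1, b1, hab, hne⟩ := hm
        have hz : W m = 0 :=
          AlternatingMap.map_eq_zero_of_eq _ _
            (show (v ∘ m) a1 = (v ∘ m) b1 by simp [Function.comp, hab]) hne
        rw [hz]
        exact Submodule.zero_mem _
    have hsub : (⋀[F]^ℓ V : Submodule F (ExteriorAlgebra F V)) ≤
        Submodule.span F
          (Set.range fun s : {s : Fin ℓ → Fin n // StrictMono s} => W s.1) := by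
      rw [← ιMulti_span_fixedDegree F ℓ (M := V), Submodule.span_le]
      rintro _ ⟨u, rfl⟩
      have h1 : (ιMulti F ℓ) u = (ιMulti F ℓ) (fun i => ∑ j, v.repr (u i) j • v j) := by
        congr 1
        funext i
        rw [Module.Basis.sum_repr]
      have h2 : (ιMulti F ℓ (M := V)) (fun i => ∑ j, v.repr (u i) j • v j)
          = ∑ r : Fin ℓ → Fin n, (∏ i, v.repr (u i) (r i)) • W r := by
        rw [← AlternatingMap.coe_multilinearMap,
          MultilinearMap.map_sum (ιMulti F ℓ (M := V)).toMultilinearMap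
            (fun i j => v.repr (u i) j • v j)]
        refine Finset.sum_congr rfl fun r _ => ?_
        rw [MultilinearMap.map_smul_univ]
        rfl
      rw [SetLike.mem_coe, h1, h2]
      exact Submodule.sum_mem _ fun r _ => Submodule.smul_mem _ _ (hmono r)
    exact hsub hX
  -- determinant computations
  have hdiag : ∀ s : Fin ℓ → Fin n, StrictMono s →
      H (W s) (W s) = ∏ i, h (v (s i)) (v (s i)) := by
    intro s hs
    rw [hWwedge, H_det]
    have hM : (Matrix.of fun i j => h ((v ∘ s) i) ((v ∘ s) j))
        = Matrix.diagonal (fun i => h (v (s i)) (v (s i))) := by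
      ext i j
      rcases eq_or_ne i j with rfl | hij
      · simp
      · rw [Matrix.of_apply, Matrix.diagonal_apply_ne _ hij]
        exact h_orth _ _ (fun hc' => hij (hs.injective hc'))
    rw [hM, Matrix.det_diagonal]
  have hcross : ∀ s t : Fin ℓ → Fin n, StrictMono s → StrictMono t → s ≠ t →
      H (W s) (W t) = 0 := by
    intro s t hs ht hst
    rw [hWwedge, hWwedge, H_det]
    have hr : Set.range s ≠ Set.range t :=
      fun he => hst (strictMono_eq_of_range_eq hs ht he)
    have hcases : (∃ i, ∀ j, s i ≠ t j) ∨ (∃ j, ∀ i, s i ≠ t j) := by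
      by_contra hcon
      push_neg at hcon
      obtain ⟨h1, h2⟩ := hcon
      apply hr
      apply Set.eq_of_subset_of_subset
      · rintro x ⟨i, rfl⟩
        obtain ⟨j, hj⟩ := h1 i
        exact ⟨j, hj.symm⟩
      · rintro x ⟨j, rfl⟩
        obtain ⟨i, hi⟩ := h2 j
        exact ⟨i, hi⟩
    rcases hcases with ⟨i, hi⟩ | ⟨j, hj⟩
    · exact Matrix.det_eq_zero_of_row_eq_zero i (fun j => h_orth _ _ (hi j))
    · exact Matrix.det_eq_zero_of_column_eq_zero j (fun i => h_orth _ _ (hj i))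
  -- non-degeneracy
  have part2 : ∀ X ∈ ⋀[F]^ℓ V,
      (∀ Y ∈ ⋀[F]^ℓ V, Kmk ⇑σ δ (H X Y) ((-1 : F) ^ ℓ * b (X * Y)) = 0) → X = 0 := by
    intro X hX hK
    have hHX : ∀ Y ∈ ⋀[F]^ℓ V, H X Y = 0 := fun Y hY => ((part1 X hX Y hY).1 (hK Y hY)).2
    obtain ⟨a, ha⟩ := (Submodule.mem_span_range_iff_exists_fun F).1 (hspan X hX)
    have hacoef : ∀ t : {s : Fin ℓ → Fin n // StrictMono s}, a t = 0 := by
      intro t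
      have h0 : H X (W t.1) = 0 := hHX _ (hWmem t.1)
      rw [← ha, hHsum] at h0
      rw [Finset.sum_congr rfl
        (fun s _ => (H_smul_left (a s) (W s.1) (W t.1) : _))] at h0
      rw [Finset.sum_eq_single t
        (fun s _ hne => by
          rw [hcross s.1 t.1 s.2 t.2 (fun he => hne (Subtype.ext he)), mul_zero])
        (fun hni => absurd (Finset.mem_univ t) hni)] at h0
      rw [hdiag t.1 t.2] at h0
      have hprod : (∏ i, h (v (t.1 i)) (v (t.1 i))) ≠ 0 :=
        Finset.prod_ne_zero_iff.2 fun i _ => hc _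
      have hσ0 : σ (a t) = 0 := by
        rcases mul_eq_zero.1 h0 with h' | h'
        · exact h'
        · exact absurd h' hprod
      apply σ.injective
      rw [hσ0, map_zero]
    rw [← ha]
    simp [hacoef]
  refine ⟨part1, part2, ?_⟩
  intro haniso X hX hX0 hK
  exact haniso X hX hX0 ((part1 X hX X hX).1 hK).2
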